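/- Let q be a prime power and let n be an odd positive integer coprime to q. Then x − 1 is the only SCRIM factor of x^n − 1 over F_{q^2} if and only if for each prime divisor l of n, ord_l(q^2) is even or ord_l(q) is odd. -/

import Mathlib

open Polynomial

/-- The reciprocal polynomial `f*(x) = x^(deg f) * f(0)⁻¹ * f(1/x)`. -/
noncomputable def crecip {F : Type*} [Field F] (f : F[X]) : F[X] :=
  C (f.coeff 0)⁻¹ * f.reverse

/-- The conjugate-reciprocal polynomial `f†`, obtained by applying the
conjugation `a ↦ a ^ q` to each coefficient of `f*`. -/
noncomputable def cdagger {F : Type*} [Field F] (q : ℕ) (f : F[X]) : F[X] :=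
  (crecip f).sum fun i a => C (a ^ q) * X ^ i

/-- A polynomial is SCRIM if it is monic, irreducible, and self-conjugate-reciprocal. -/
def IsSCRIM {F : Type*} [Field F] (q : ℕ) (f : F[X]) : Prop :=
  f.Monic ∧ Irreducible f ∧ f = cdagger q f

/-- The set `Ω_{q²,n}` of SCRIM factors of `x^n - 1` over `F = F_{q²}`. -/
def scrimFactors (F : Type*) [Field F] (q n : ℕ) : Set F[X] :=
  {f | IsSCRIM q f ∧ f ∣ X ^ n - 1}

section Helpers
variable {F : Type*} [Field F]

lemma cdagger_eq_map (q : ℕ) (f : F[X]) (φ : F →+* F) (hφ : ∀ a, φ a = a ^ q) :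
    cdagger q f = (crecip f).map φ := by
  show _ = eval₂ (C.comp φ) X (crecip f)
  rw [eval₂_eq_sum, cdagger]
  simp only [RingHom.comp_apply, RingHom.coe_comp, Function.comp_apply, hφ]

lemma aeval_cdagger (q : ℕ) (f : F[X])
    {K : Type*} [Field K] [Algebra F K]
    (φ : F →+* F) (hφ : ∀ a, φ a = a ^ q)
    (ψ : K →+* K) (hψ : ∀ x, ψ x = x ^ q)
    {α : K} (hα : α ≠ 0) (hroot : aeval α f = 0) :
    aeval (α⁻¹ ^ q) (cdagger q f) = 0 := by
  haveI := invertibleOfNonzero hα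
  have h1 : eval₂ (algebraMap F K) α⁻¹ (crecip f) = 0 := by
    rw [crecip, eval₂_mul]
    have h2 : eval₂ (algebraMap F K) α⁻¹ (reverse f) = 0 := by
      rw [← invOf_eq_inv α, eval₂_reverse_eq_zero_iff, ← aeval_def, hroot]
    rw [h2, mul_zero]
  have hcomp : (algebraMap F K).comp φ = ψ.comp (algebraMap F K) := by
    ext a; simp [hφ, hψ, map_pow]
  calc aeval (α⁻¹ ^ q) (cdagger q f)
      = eval₂ ((algebraMap F K).comp φ) (α⁻¹ ^ q) (crecip f) := by
        rw [cdagger_eq_map q f φ hφ, aeval_def, eval₂_map]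
    _ = eval₂ (ψ.comp (algebraMap F K)) (ψ α⁻¹) (crecip f) := by rw [hcomp, hψ]
    _ = ψ (eval₂ (algebraMap F K) α⁻¹ (crecip f)) := (hom_eval₂ _ _ _ _).symm
    _ = 0 := by rw [h1, map_zero]

lemma crecip_monic {f : F[X]} (h0 : f.coeff 0 ≠ 0) : (crecip f).Monic := by
  have htr : f.natTrailingDegree = 0 := natTrailingDegree_eq_zero.mpr (Or.inr h0)
  have : (crecip f).leadingCoeff = 1 := by
    rw [crecip, leadingCoeff_mul, leadingCoeff_C, reverse_leadingCoeff, trailingCoeff, htr,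
      inv_mul_cancel₀ h0]
  exact this

lemma crecip_natDegree {f : F[X]} (h0 : f.coeff 0 ≠ 0) :
    (crecip f).natDegree = f.natDegree := by
  have htr : f.natTrailingDegree = 0 := natTrailingDegree_eq_zero.mpr (Or.inr h0)
  rw [crecip, natDegree_C_mul (inv_ne_zero h0), reverse_natDegree, htr, Nat.sub_zero]

lemma coeff_zero_ne_zero_of_dvd {f : F[X]} {n : ℕ} (hn0 : 0 < n) (hdvd : f ∣ X ^ n - 1) :
    f.coeff 0 ≠ 0 := by
  intro h
  have h1 : (X : F[X]) ∣ f := X_dvd_iff.mpr h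
  have h2 : (X : F[X]) ∣ X ^ n - 1 := h1.trans hdvd
  have h3 := X_dvd_iff.mp h2
  rw [coeff_sub, coeff_X_pow, coeff_one] at h3
  rw [if_neg (by omega : ¬ (0 = n)), if_pos rfl] at h3
  simp at h3

end Helpers

/-- Frobenius-type algebra endomorphism `x ↦ x ^ p ^ j`. -/
noncomputable def frobAlg (F K : Type*) [Field F] [Field K] [Algebra F K]
    (p j : ℕ) [Fact p.Prime] [CharP K p] (hfix : ∀ a : F, a ^ p ^ j = a) : K →ₐ[F] K :=
  AlgHom.mk' (iterateFrobenius K p j) fun c x => by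
    simp only [iterateFrobenius_def, Algebra.smul_def, mul_pow, ← map_pow, hfix c]

lemma frobAlg_apply (F : Type*) {K : Type*} [Field F] [Field K] [Algebra F K]
    (p j : ℕ) [Fact p.Prime] [CharP K p] (hfix : ∀ a : F, a ^ p ^ j = a) (x : K) :
    frobAlg F K p j hfix x = x ^ p ^ j := rfl

lemma nt_bwd {q l : ℕ} (hl : l.Prime)
    (hodd : Odd (orderOf ((q : ZMod l) ^ 2))) (heven : Even (orderOf (q : ZMod l))) :
    ∃ m, Odd m ∧ (q : ZMod l) ^ m = -1 := by
  haveI : Fact l.Prime := ⟨hl⟩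
  set b : ZMod l := (q : ZMod l) with hb
  set E := orderOf b with hE
  have h2 : orderOf (b ^ 2) = E / Nat.gcd E 2 := orderOf_pow' b (by norm_num)
  have hg : Nat.gcd E 2 = 2 := Nat.gcd_eq_right ((even_iff_two_dvd).mp heven)
  rw [hg] at h2
  set u := E / 2 with hu
  rw [h2] at hodd
  have hu0 : u ≠ 0 := by rintro h; rw [h] at hodd; exact (Nat.not_even_iff_odd.mpr hodd) Even.zero
  have hE2 : E = 2 * u := (Nat.two_mul_div_two_of_even heven).symm
  have hbE : b ^ E = 1 := pow_orderOf_eq_one b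
  have hsq : (b ^ u) * (b ^ u) = 1 := by
    rw [← pow_add, ← two_mul, ← hE2, hbE]
  have hne : b ^ u ≠ 1 := by
    intro h
    have h3 := orderOf_dvd_of_pow_eq_one h
    rw [← hE] at h3
    have : E ≤ u := Nat.le_of_dvd (Nat.pos_of_ne_zero hu0) h3
    omega
  rcases mul_self_eq_one_iff.mp hsq with h | h
  · exact absurd h hne
  · exact ⟨u, hodd, h⟩

lemma nt_fwd {q n e : ℕ} (hn : Odd n) (he : e ∣ n) (he1 : 1 < e)
    {m : ℕ} (hm : Odd m) (hqm : (q : ZMod e) ^ m = -1) :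
    ∃ l, l.Prime ∧ l ∣ n ∧ Odd (orderOf ((q : ZMod l) ^ 2)) ∧ Even (orderOf (q : ZMod l)) := by
  have he0 : e ≠ 1 := by omega
  set l := e.minFac with hldef
  have hlp : l.Prime := Nat.minFac_prime he0
  have hle : l ∣ e := Nat.minFac_dvd e
  have hln : l ∣ n := hle.trans he
  haveI : Fact l.Prime := ⟨hlp⟩
  have hlodd : Odd l := hn.of_dvd_nat hln
  have hl2 : 2 < l := by
    rcases hlp.two_le.lt_or_eq with h | h
    · omega
    · exfalso; rw [← h] at hlodd; exact (Nat.not_even_iff_odd.mpr hlodd) even_two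
  haveI : Fact (2 < l) := ⟨hl2⟩
  set b : ZMod l := (q : ZMod l) with hbdef
  have hbm : b ^ m = -1 := by
    have h := congrArg (ZMod.castHom hle (ZMod l)) hqm
    rwa [map_pow, map_neg, map_one, ZMod.castHom_apply, ZMod.cast_natCast hle] at h
  have hne11 : (-1 : ZMod l) ≠ 1 := by
    intro h
    exact ZMod.neg_one_ne_one (n := l) h
  set E := orderOf b with hE
  have hE2m : E ∣ m * 2 := by
    apply orderOf_dvd_of_pow_eq_one
    rw [pow_mul, hbm, neg_one_sq]
  have hEnm : ¬ E ∣ m := by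
    intro h
    have : b ^ m = 1 := orderOf_dvd_iff_pow_eq_one.mp h
    rw [hbm] at this
    exact hne11 this
  have hEeven : Even E := by
    by_contra h
    have hEodd : Odd E := Nat.not_even_iff_odd.mp h
    exact hEnm (Nat.Coprime.dvd_of_dvd_mul_right (Nat.coprime_two_right.mpr hEodd) hE2m)
  set u := E / 2 with hu
  have hE2 : E = 2 * u := (Nat.two_mul_div_two_of_even hEeven).symm
  have hum : u ∣ m := by
    have : 2 * u ∣ 2 * m := by rw [← hE2]; rwa [mul_comm m 2] at hE2m
    exact (mul_dvd_mul_iff_left (two_ne_zero)).mp this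
  have huodd : Odd u := hm.of_dvd_nat hum
  have hordsq : orderOf (b ^ 2) = u := by
    rw [orderOf_pow' b (by norm_num), ← hE, Nat.gcd_eq_right ((even_iff_two_dvd).mp hEeven), hu]
  refine ⟨l, hlp, hln, ?_, ?_⟩
  · rw [hordsq]; exact huodd
  · exact hEeven

section Frob
variable {p k q : ℕ} [Fact p.Prime] (hpk : p ^ k = q)
  {F : Type*} [Field F] [Fintype F] [CharP F p] (hF : Fintype.card F = q ^ 2)

include hpk in
lemma hQpow (i : ℕ) : (q ^ 2) ^ i = p ^ (2 * k * i) := by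
  rw [← hpk, ← pow_mul, ← pow_mul]; ring_nf

include hpk hF in
lemma hfixF (i : ℕ) : ∀ a : F, a ^ p ^ (2 * k * i) = a := by
  intro a
  rw [← hQpow hpk i, ← hF]
  exact FiniteField.pow_card_pow i a

include hpk hF in
lemma aeval_pow_card_pow {K : Type*} [Field K] [Algebra F K]
    (f : F[X]) (α : K) (h : aeval α f = 0) (i : ℕ) :
    aeval (α ^ (q ^ 2) ^ i) f = 0 := by
  haveI : CharP K p := charP_of_injective_algebraMap (algebraMap F K).injective p
  rw [hQpow hpk i, ← frobAlg_apply F p (2 * k * i) (hfixF hpk hF i) α, aeval_algHom_apply,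
    h, map_zero]

include hpk hF in
lemma root_conj_mem (hk : 0 < k) {f : F[X]} (hirr : Irreducible f) [Fact (Irreducible f)]
    {β : AdjoinRoot f} (hβ : aeval β f = 0) :
    ∃ i, β = (AdjoinRoot.root f) ^ (q ^ 2) ^ i := by
  haveI : CharP (AdjoinRoot f) p :=
    charP_of_injective_algebraMap (algebraMap F (AdjoinRoot f)).injective p
  let K := AdjoinRoot f
  set α : AdjoinRoot f := AdjoinRoot.root f with hα
  set d := f.natDegree with hd
  have hd0 : 0 < d := hirr.natDegree_pos
  have hf0 : f ≠ 0 := hirr.ne_zero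
  have hq2 : 1 < q ^ 2 := by
    have hp2 : 2 ≤ p := (Fact.out : p.Prime).two_le
    have : 2 ≤ q := by
      calc 2 = 2 ^ 1 := rfl
        _ ≤ p ^ k := Nat.pow_le_pow_left hp2 k |>.trans' (Nat.pow_le_pow_right (by omega) hk)
        _ = q := hpk
    nlinarith
  let pb := AdjoinRoot.powerBasis hf0
  haveI : Module.Finite F K := pb.finite
  haveI : Finite K := Module.finite_of_finite F
  haveI : Fintype K := Fintype.ofFinite K
  have hcardK : Fintype.card K = (q ^ 2) ^ d := by
    rw [Module.card_eq_pow_finrank (K := F) (V := K), hF, pb.finrank]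
    rfl
  have hrootα : aeval α f = 0 := by
    rw [hα, AdjoinRoot.aeval_eq, AdjoinRoot.mk_self]
  have hroots : ∀ i : ℕ, aeval (α ^ (q ^ 2) ^ i) f = 0 := fun i =>
    aeval_pow_card_pow hpk hF f α hrootα i
  have hdist : ∀ s, 0 < s → s < d → α ^ (q ^ 2) ^ s ≠ α := by
    intro s hs0 hsd heq
    set τ := frobAlg F K p (2 * k * s) (hfixF hpk hF s) with hτ
    have hτα : τ α = α := by
      rw [frobAlg_apply, ← hQpow hpk s]; exact heq
    have hτid : τ = AlgHom.id F K := AdjoinRoot.algHom_ext (by rw [hτα]; rfl)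
    have hall : ∀ x : K, x ^ (q ^ 2) ^ s = x := by
      intro x
      have := DFunLike.congr_fun hτid x
      rwa [frobAlg_apply, AlgHom.coe_id, id_eq, ← hQpow hpk s] at this
    set g : K[X] := X ^ (q ^ 2) ^ s - X with hg
    have hg0 : g ≠ 0 := FiniteField.X_pow_card_pow_sub_X_ne_zero K hs0.ne' hq2
    have hgdeg : g.natDegree = (q ^ 2) ^ s :=
      FiniteField.X_pow_card_pow_sub_X_natDegree_eq K hs0.ne' hq2
    have hsub : (Finset.univ : Finset K) ⊆ g.roots.toFinset := by
      intro x _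
      rw [Multiset.mem_toFinset, mem_roots hg0]
      show g.eval x = 0
      rw [hg]
      simp [hall x]
    have hle : (q ^ 2) ^ d ≤ (q ^ 2) ^ s := by
      calc (q ^ 2) ^ d = Fintype.card K := hcardK.symm
        _ = (Finset.univ : Finset K).card := Finset.card_univ.symm
        _ ≤ g.roots.toFinset.card := Finset.card_le_card hsub
        _ ≤ Multiset.card g.roots := g.roots.toFinset_card_le
        _ ≤ g.natDegree := g.card_roots'
        _ = (q ^ 2) ^ s := hgdeg
    have : (q ^ 2) ^ s < (q ^ 2) ^ d := Nat.pow_lt_pow_right hq2 hsd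
    omega
  set S : Finset K := (Finset.range d).image (fun i => α ^ (q ^ 2) ^ i) with hS
  have hinj : Set.InjOn (fun i => α ^ (q ^ 2) ^ i) ↑(Finset.range d) := by
    intro i hi j hj hij
    simp only [Finset.coe_range, Set.mem_Iio] at hi hj
    by_contra hne
    rcases Nat.lt_or_ge i j with hlt | hge
    · have key : α ^ (q ^ 2) ^ (j - i) = α := by
        have h1 : (α ^ (q ^ 2) ^ (j - i)) ^ (q ^ 2) ^ i = α ^ (q ^ 2) ^ i := by
          rw [← pow_mul, ← pow_add, Nat.sub_add_cancel hlt.le]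
          exact hij.symm
        have hinj2 : Function.Injective (fun x : K => x ^ (q ^ 2) ^ i) := by
          have h5 := (frobAlg F K p (2 * k * i) (hfixF hpk hF i)).toRingHom.injective
          intro a b hab
          apply h5
          show a ^ p ^ (2 * k * i) = b ^ p ^ (2 * k * i)
          rw [← hQpow hpk i]
          exact hab
        exact hinj2 h1
      exact hdist (j - i) (by omega) (by omega) key
    · have hlt : j < i := by omega
      have key : α ^ (q ^ 2) ^ (i - j) = α := by
        have h1 : (α ^ (q ^ 2) ^ (i - j)) ^ (q ^ 2) ^ j = α ^ (q ^ 2) ^ j := by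
          rw [← pow_mul, ← pow_add, Nat.sub_add_cancel hlt.le]
          exact hij
        have hinj2 : Function.Injective (fun x : K => x ^ (q ^ 2) ^ j) := by
          have h5 := (frobAlg F K p (2 * k * j) (hfixF hpk hF j)).toRingHom.injective
          intro a b hab
          apply h5
          show a ^ p ^ (2 * k * j) = b ^ p ^ (2 * k * j)
          rw [← hQpow hpk j]
          exact hab
        exact hinj2 h1
      exact hdist (i - j) (by omega) (by omega) key
  have hScard : S.card = d := by
    rw [hS, Finset.card_image_of_injOn hinj, Finset.card_range]
  by_contra hcon
  push_neg at hcon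
  have hβS : β ∉ S := by
    intro hmem
    rw [hS, Finset.mem_image] at hmem
    obtain ⟨i, _, hi⟩ := hmem
    exact hcon i hi.symm
  set fK : K[X] := f.map (algebraMap F K) with hfK
  have hfK0 : fK ≠ 0 := by
    rw [hfK, Ne, Polynomial.map_eq_zero]
    exact hf0
  have hfKdeg : fK.natDegree = d := natDegree_map (algebraMap F K)
  have hroot_mem : ∀ x : K, aeval x f = 0 → x ∈ fK.roots.toFinset := by
    intro x hx
    rw [Multiset.mem_toFinset, mem_roots hfK0]
    show fK.eval x = 0
    rw [hfK, eval_map, ← aeval_def, hx]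
  have hsub2 : insert β S ⊆ fK.roots.toFinset := by
    intro x hx
    rcases Finset.mem_insert.mp hx with h | h
    · exact hroot_mem x (h ▸ hβ)
    · rw [hS, Finset.mem_image] at h
      obtain ⟨i, _, hi⟩ := h
      exact hroot_mem x (hi ▸ hroots i)
  have : d + 1 ≤ d := by
    calc d + 1 = (insert β S).card := by rw [Finset.card_insert_of_notMem hβS, hScard]
      _ ≤ fK.roots.toFinset.card := Finset.card_le_card hsub2
      _ ≤ Multiset.card fK.roots := fK.roots.toFinset_card_le
      _ ≤ fK.natDegree := fK.card_roots'
      _ = d := hfKdeg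
  omega

include hpk hF in
lemma scrim_to_exponent (hk : 0 < k) {n : ℕ} (hgcd : Nat.Coprime n q) (hn0 : 0 < n)
    {f : F[X]} (hscrim : IsSCRIM q f) (hdvd : f ∣ X ^ n - 1) (hne : f ≠ X - 1) :
    ∃ e, e ∣ n ∧ 1 < e ∧ ∃ m, Odd m ∧ (q : ZMod e) ^ m = -1 := by
  obtain ⟨hmonic, hirr, hself⟩ := hscrim
  haveI : Fact (Irreducible f) := ⟨hirr⟩
  haveI : CharP (AdjoinRoot f) p :=
    charP_of_injective_algebraMap (algebraMap F (AdjoinRoot f)).injective p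
  set α := AdjoinRoot.root f with hαdef
  have hroot : aeval α f = 0 := by rw [hαdef, AdjoinRoot.aeval_eq, AdjoinRoot.mk_self]
  have hαn : α ^ n = 1 := by
    obtain ⟨g, hg⟩ := hdvd
    have h2 := congrArg (aeval α) hg
    rw [map_sub, map_pow, aeval_X, map_one, map_mul, hroot, zero_mul] at h2
    exact sub_eq_zero.mp h2
  have hα0 : α ≠ 0 := by
    intro h
    rw [h, zero_pow hn0.ne'] at hαn
    exact zero_ne_one hαn
  have hfin : IsOfFinOrder α := isOfFinOrder_iff_pow_eq_one.mpr ⟨n, hn0, hαn⟩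
  set e := orderOf α with hedef
  have hepos : 0 < e := hfin.orderOf_pos
  have hedvd : e ∣ n := orderOf_dvd_of_pow_eq_one hαn
  have he1 : 1 < e := by
    rcases Nat.lt_or_ge 1 e with h | h
    · exact h
    · exfalso
      have he : e = 1 := by omega
      have hα1 : α = 1 := orderOf_eq_one_iff.mp he
      have hmp : f = minpoly F α := minpoly.eq_of_irreducible_of_monic hirr hroot hmonic
      rw [hα1, minpoly.one] at hmp
      exact hne hmp
  have hφ : ∀ a : F, iterateFrobenius F p k a = a ^ q := by
    intro a; rw [iterateFrobenius_def, hpk]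
  have hψ : ∀ x : AdjoinRoot f, iterateFrobenius (AdjoinRoot f) p k x = x ^ q := by
    intro x; rw [iterateFrobenius_def, hpk]
  have hβ : aeval (α⁻¹ ^ q) f = 0 := by
    have h3 := aeval_cdagger q f (iterateFrobenius F p k) hφ
      (iterateFrobenius (AdjoinRoot f) p k) hψ hα0 hroot
    rwa [← hself] at h3
  obtain ⟨i, hi⟩ := root_conj_mem hpk hF hk hirr hβ
  have hpow1 : α ^ ((q ^ 2) ^ i + q) = 1 := by
    rw [pow_add, ← hi, ← mul_pow, inv_mul_cancel₀ hα0, one_pow]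
  have hdvd2 : e ∣ (q ^ 2) ^ i + q := orderOf_dvd_of_pow_eq_one hpow1
  haveI : NeZero e := ⟨by omega⟩
  haveI : Fact (1 < e) := ⟨he1⟩
  set b : ZMod e := (q : ZMod e) with hbdef
  have hz : (((q ^ 2) ^ i + q : ℕ) : ZMod e) = 0 :=
    (ZMod.natCast_eq_zero_iff _ _).mpr hdvd2
  push_cast at hz
  have hb2i : (b ^ 2) ^ i = -b := by
    rw [hbdef]
    exact eq_neg_of_add_eq_zero_left hz
  have hco : Nat.Coprime q e := (Nat.Coprime.coprime_dvd_left hedvd hgcd).symm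
  set u : (ZMod e)ˣ := ZMod.unitOfCoprime q hco with hudef
  have hu : (u : ZMod e) = b := ZMod.coe_unitOfCoprime q hco
  set t := orderOf b with htdef
  have ht0 : 0 < t := by
    rw [htdef, ← hu, orderOf_units]
    exact orderOf_pos u
  have hbt : b ^ t = 1 := pow_orderOf_eq_one b
  set m := 2 * i + 2 * t - 1 with hmdef
  have hmodd : Odd m := ⟨i + t - 1, by omega⟩
  have hm1 : m + 1 = 2 * i + 2 * t := by omega
  have hbm1 : b ^ (m + 1) = -b := by
    rw [hm1, pow_add, pow_mul, hb2i, mul_comm 2 t, pow_mul, hbt, one_pow, mul_one]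
  have hfinal : b ^ m = -1 := by
    have h4 : b ^ m * (u : ZMod e) = -1 * (u : ZMod e) := by
      rw [hu, ← pow_succ, hbm1, neg_one_mul]
    rw [hu] at h4
    exact (u.isUnit).mul_right_cancel h4
  exact ⟨e, hedvd, he1, m, hmodd, hfinal⟩

include hpk hF in
lemma X_sub_one_mem_scrim {n : ℕ} (hn0 : 0 < n) :
    (X - 1 : F[X]) ∈ scrimFactors F q n := by
  have hφ : ∀ a : F, iterateFrobenius F p k a = a ^ q := by
    intro a; rw [iterateFrobenius_def, hpk]
  have hcoeff : (X - 1 : F[X]).coeff 0 = -1 := by simp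
  have hrev : (X - 1 : F[X]).reverse = 1 - X := by
    have hd : (X - 1 : F[X]).natDegree = 1 := by compute_degree!
    rw [reverse, hd, sub_eq_add_neg, reflect_add, reflect_one_X, ← C_1, ← C_neg, reflect_C]
    simp
    ring
  have hcrec : crecip (X - 1 : F[X]) = X - 1 := by
    rw [crecip, hcoeff, hrev, inv_neg, inv_one, map_neg, C_1]
    ring
  refine ⟨⟨monic_X_sub_C 1, ?_, ?_⟩, ?_⟩
  · have := irreducible_X_sub_C (1 : F)
    rwa [C_1] at this
  · rw [cdagger_eq_map q _ (iterateFrobenius F p k) hφ, hcrec]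
    rw [Polynomial.map_sub, map_X, Polynomial.map_one]
  · have : (X - C 1 : F[X]) ∣ X ^ n - 1 := by
      rw [dvd_iff_isRoot]
      simp [IsRoot]
    rwa [C_1] at this

include hpk hF in
lemma exponent_to_scrim (hk : 0 < k) {n l : ℕ} (hgcd : Nat.Coprime n q) (hn0 : 0 < n)
    (hl : l.Prime) (hln : l ∣ n) {m : ℕ} (hm : Odd m) (hqm : (q : ZMod l) ^ m = -1) :
    ∃ f, f ∈ scrimFactors F q n ∧ f ≠ X - 1 := by
  classical
  -- p does not divide l
  have hpq : p ∣ q := hpk ▸ dvd_pow_self p hk.ne'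
  have hlq : Nat.Coprime l q := Nat.Coprime.coprime_dvd_left hln hgcd
  have hpl : ¬ (p : ℕ) ∣ l := by
    intro h
    have h2 : p ∣ Nat.gcd l q := Nat.dvd_gcd h hpq
    rw [hlq] at h2
    exact Nat.Prime.one_lt (Fact.out : p.Prime) |>.ne' (Nat.eq_one_of_dvd_one h2 ▸ rfl)
  -- splitting field of X^l - 1
  set g : F[X] := X ^ l - 1 with hgdef
  set K := g.SplittingField with hKdef
  have hlF : (l : F) ≠ 0 := by
    rw [Ne, CharP.cast_eq_zero_iff F p l]
    exact hpl
  have hsep : g.Separable := by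
    have := separable_X_pow_sub_C (F := F) (1 : F) hlF one_ne_zero
    rwa [C_1] at this
  have hgdeg : g.natDegree = l := by
    rw [hgdef, ← C_1]
    exact natDegree_X_pow_sub_C
  have hg0 : g ≠ 0 := by
    intro h
    rw [h, natDegree_zero] at hgdeg
    exact hl.pos.ne hgdeg
  haveI : FiniteDimensional F K := IsSplittingField.finiteDimensional K g
  haveI : Finite K := Module.finite_of_finite F
  haveI : Fintype K := Fintype.ofFinite K
  set ι := algebraMap F K with hι
  have hsplits : Splits (g.map ι) := SplittingField.splits g
  set R : Multiset K := (g.map ι).roots with hR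
  have hRcard : Multiset.card R = l := by
    rw [hR, ← hsplits.natDegree_eq_card_roots, natDegree_map, hgdeg]
  have hRnodup : R.Nodup := nodup_roots (hsep.map)
  have hTcard : R.toFinset.card = l := by
    rw [Multiset.toFinset_card_of_nodup hRnodup, hRcard]
  have hmem_pow : ∀ x ∈ R.toFinset, x ^ l = 1 := by
    intro x hx
    rw [Multiset.mem_toFinset, hR, mem_roots (map_ne_zero hg0)] at hx
    have hx2 : eval x (map ι (X ^ l - 1 : F[X])) = 0 := hx
    rw [Polynomial.map_sub, Polynomial.map_pow, map_X, Polynomial.map_one, eval_sub,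
      eval_pow, eval_X, eval_one, sub_eq_zero] at hx2
    exact hx2
  obtain ⟨ζ, hζR, hζ1⟩ : ∃ ζ ∈ R.toFinset, ζ ≠ 1 := by
    apply Finset.exists_mem_ne
    rw [hTcard]
    exact hl.one_lt
  have hζl : ζ ^ l = 1 := hmem_pow ζ hζR
  have hord : orderOf ζ = l := by
    have hdvd := orderOf_dvd_of_pow_eq_one hζl
    rcases (Nat.Prime.eq_one_or_self_of_dvd hl _ hdvd) with h | h
    · exact absurd (orderOf_eq_one_iff.mp h) hζ1
    · exact h
  have hζ0 : ζ ≠ 0 := by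
    intro h
    rw [h, zero_pow hl.pos.ne'] at hζl
    exact zero_ne_one hζl
  have hζn : ζ ^ n = 1 := by
    obtain ⟨c, hc⟩ := hln
    rw [hc, pow_mul, hζl, one_pow]
  have hint : IsIntegral F ζ := IsIntegral.of_finite F ζ
  set f := minpoly F ζ with hfdef
  have hmonic : f.Monic := minpoly.monic hint
  have hirr : Irreducible f := minpoly.irreducible hint
  have hroot : aeval ζ f = 0 := minpoly.aeval F ζ
  have hfdvd : f ∣ X ^ n - 1 :=
    minpoly.dvd F ζ (by rw [map_sub, map_pow, aeval_X, map_one, hζn, sub_self])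
  have hfne : f ≠ X - 1 := by
    intro h
    rw [h, map_sub, aeval_X, map_one, sub_eq_zero] at hroot
    exact hζ1 hroot
  have h0 : f.coeff 0 ≠ 0 := coeff_zero_ne_zero_of_dvd hn0 hfdvd
  have hqml : l ∣ q ^ (m + 1) + q := by
    have hz : ((q ^ (m + 1) + q : ℕ) : ZMod l) = 0 := by
      push_cast
      rw [pow_succ, hqm, neg_one_mul]
      simp
    exact (ZMod.natCast_eq_zero_iff _ _).mp hz
  have hζpow : ζ ^ (q ^ (m + 1) + q) = 1 := by
    obtain ⟨c, hc⟩ := hqml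
    rw [hc, pow_mul, hζl, one_pow]
  have hβroot : aeval (ζ⁻¹ ^ q) f = 0 := by
    have hw : q ^ (m + 1) = (q ^ 2) ^ ((m + 1) / 2) := by
      obtain ⟨w, hwm⟩ := hm
      rw [← pow_mul]
      congr 1
      omega
    have h1 : aeval (ζ ^ q ^ (m + 1)) f = 0 := by
      rw [hw]
      exact aeval_pow_card_pow hpk hF f ζ hroot _
    have h2 : ζ ^ q ^ (m + 1) = ζ⁻¹ ^ q := by
      have h3 : ζ ^ q ^ (m + 1) * ζ ^ q = 1 := by rw [← pow_add, hζpow]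
      rw [inv_pow]
      exact eq_inv_of_mul_eq_one_left h3
    rwa [h2] at h1
  have hφ : ∀ a : F, iterateFrobenius F p k a = a ^ q := fun a => by
    rw [iterateFrobenius_def, hpk]
  haveI : CharP K p := charP_of_injective_algebraMap (algebraMap F K).injective p
  have hψ : ∀ x : K, iterateFrobenius K p k x = x ^ q := fun x => by
    rw [iterateFrobenius_def, hpk]
  have hcd_root : aeval (ζ⁻¹ ^ q) (cdagger q f) = 0 :=
    aeval_cdagger q f _ hφ _ hψ hζ0 hroot
  have hcd_monic : (cdagger q f).Monic := by
    rw [cdagger_eq_map q f _ hφ]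
    exact (crecip_monic h0).map _
  have hcd_deg : (cdagger q f).natDegree = f.natDegree := by
    rw [cdagger_eq_map q f _ hφ, natDegree_map, crecip_natDegree h0]
  have hfd : f ∣ cdagger q f := by
    have hmp : f = minpoly F (ζ⁻¹ ^ q) :=
      minpoly.eq_of_irreducible_of_monic hirr hβroot hmonic
    exact dvd_trans (dvd_of_eq hmp) (minpoly.dvd F _ hcd_root)
  have hfeq : f = cdagger q f :=
    eq_of_dvd_of_natDegree_le_of_leadingCoeff hfd (le_of_eq hcd_deg)
      (hmonic.leadingCoeff.trans hcd_monic.leadingCoeff.symm)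
  exact ⟨f, ⟨⟨hmonic, hirr, hfeq⟩, hfdvd⟩, hfne⟩

end Frob

theorem stmt4 {q n : ℕ} (hq : IsPrimePow q)
    {F : Type*} [Field F] [Fintype F] (hF : Fintype.card F = q ^ 2)
    (hn : Odd n) (hgcd : Nat.Coprime n q) :
    scrimFactors F q n = {X - 1} ↔
      ∀ l : ℕ, l.Prime → l ∣ n →
        Even (orderOf ((q : ZMod l) ^ 2)) ∨ Odd (orderOf (q : ZMod l)) := by
  obtain ⟨p, k, hpp, hk, hpk⟩ := hq
  have hpnat : p.Prime := Nat.prime_iff.mpr hpp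
  haveI : Fact p.Prime := ⟨hpnat⟩
  have hn0 : 0 < n := hn.pos
  obtain ⟨p', hp'⟩ := CharP.exists F
  haveI := hp'
  obtain ⟨mm, hpm', hFm⟩ := FiniteField.card F p'
  have hpp' : p' = p := by
    have h1 : p' ∣ Fintype.card F := by
      rw [hFm]
      exact dvd_pow_self p' mm.pos.ne'
    rw [hF, ← hpk, ← pow_mul] at h1
    exact (Nat.prime_dvd_prime_iff_eq hpm' hpnat).mp (hpm'.dvd_of_dvd_pow h1)
  haveI : CharP F p := hpp' ▸ hp'
  constructor
  · intro hset l hlp hln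
    by_contra hcon
    push_neg at hcon
    obtain ⟨h1, h2⟩ := hcon
    obtain ⟨m, hmodd, hqm⟩ := nt_bwd hlp (Nat.not_even_iff_odd.mp h1) (Nat.not_odd_iff_even.mp h2)
    obtain ⟨f, hf, hfne⟩ := exponent_to_scrim hpk hF hk hgcd hn0 hlp hln hmodd hqm
    rw [hset] at hf
    exact hfne (Set.mem_singleton_iff.mp hf)
  · intro hcond
    apply Set.eq_singleton_iff_unique_mem.mpr
    refine ⟨X_sub_one_mem_scrim hpk hF hn0, ?_⟩
    intro f hf
    by_contra hne
    obtain ⟨e, hedvd, he1, m, hmodd, hqm⟩ :=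
      scrim_to_exponent hpk hF hk hgcd hn0 hf.1 hf.2 hne
    obtain ⟨l, hlp, hln, hodd, heven⟩ := nt_fwd hn hedvd he1 hmodd hqm
    rcases hcond l hlp hln with h | h
    · exact (Nat.not_even_iff_odd.mpr hodd) h
    · exact (Nat.not_odd_iff_even.mpr heven) h
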